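/- Let v > 1 be an odd positive integer that is not a prime power and not a perfect square. Then there is no Paley type partial difference set in any abelian group of order v. -/

import Mathlib

/-- `D` is a `(v,k,λ,μ)`-partial difference set in the finite abelian group `G`:
`|G| = v`, `|D| = k`, and every non-identity element `g` of `G` is represented
as `a * b⁻¹` with `a, b ∈ D`, `a ≠ b`, exactly `λ` times if `g ∈ D` and exactly
`μ` times otherwise. -/
def IsPDS {G : Type*} [CommGroup G] [Fintype G] [DecidableEq G]
    (D : Finset G) (v k l m : ℕ) : Prop :=
  Fintype.card G = v ∧ D.card = k ∧
  ∀ g : G, g ≠ 1 →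
    ((D ×ˢ D).filter (fun p => p.1 ≠ p.2 ∧ p.1 * p.2⁻¹ = g)).card
      = if g ∈ D then l else m

/-- A regular PDS: a PDS that is inverse-closed and avoids the identity. -/
def IsRegularPDS {G : Type*} [CommGroup G] [Fintype G] [DecidableEq G]
    (D : Finset G) (v k l m : ℕ) : Prop :=
  IsPDS D v k l m ∧ (∀ g ∈ D, g⁻¹ ∈ D) ∧ (1 : G) ∉ D

/-- A Paley type PDS: a regular PDS with parameters
`(v, (v-1)/2, (v-5)/4, (v-1)/4)` where `v = |G|`. -/
def IsPaleyPDS {G : Type*} [CommGroup G] [Fintype G] [DecidableEq G]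
    (D : Finset G) : Prop :=
  IsRegularPDS D (Fintype.card G) ((Fintype.card G - 1) / 2)
    ((Fintype.card G - 5) / 4) ((Fintype.card G - 1) / 4)

open Finset

section Aux

variable {G : Type} [CommGroup G] [Fintype G] [DecidableEq G]

lemma PDSaux.diag_card (D : Finset G) :
    ((D ×ˢ D).filter (fun p => p.1 * p.2⁻¹ = (1 : G))).card = D.card := by
  rw [show ((D ×ˢ D).filter (fun p => p.1 * p.2⁻¹ = (1 : G))) = D.diag by
    ext ⟨x, y⟩
    simp only [Finset.mem_filter, Finset.mem_product, Finset.mem_diag, mul_inv_eq_one]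
    constructor
    · rintro ⟨⟨hx, _⟩, he⟩; exact ⟨hx, he⟩
    · rintro ⟨hx, he⟩; exact ⟨⟨hx, he ▸ hx⟩, he⟩]
  exact Finset.diag_card D

lemma PDSaux.sum_count (D : Finset G) :
    ∑ g ∈ (univ.erase (1 : G)),
      ((D ×ˢ D).filter (fun p => p.1 ≠ p.2 ∧ p.1 * p.2⁻¹ = g)).card
      = D.card * D.card - D.card := by
  have hdiag : ((D ×ˢ D).filter (fun p : G × G => p.1 = p.2)).card = D.card := by
    rw [show ((D ×ˢ D).filter (fun p : G × G => p.1 = p.2)) = D.diag by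
      ext ⟨x, y⟩
      simp only [Finset.mem_filter, Finset.mem_product, Finset.mem_diag]
      constructor
      · rintro ⟨⟨hx, _⟩, he⟩; exact ⟨hx, he⟩
      · rintro ⟨hx, he⟩; exact ⟨⟨hx, he ▸ hx⟩, he⟩]
    exact Finset.diag_card D
  have hsplit := Finset.card_filter_add_card_filter_not
      (s := D ×ˢ D) (p := fun p : G × G => p.1 = p.2)
  rw [Finset.card_product, hdiag] at hsplit
  have hcard := Finset.card_eq_sum_card_fiberwise
      (s := (D ×ˢ D).filter (fun p : G × G => ¬ p.1 = p.2))
      (t := univ.erase (1 : G)) (f := fun p : G × G => p.1 * p.2⁻¹)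
      (fun p hp => by
        simp only [Finset.mem_coe, Finset.mem_filter] at hp
        exact Finset.mem_erase.mpr ⟨fun h => hp.2 (mul_inv_eq_one.mp h), Finset.mem_univ _⟩)
  rw [hcard] at hsplit
  have hco : ∀ g ∈ univ.erase (1 : G),
      (((D ×ˢ D).filter (fun p : G × G => ¬ p.1 = p.2)).filter
        (fun p : G × G => p.1 * p.2⁻¹ = g)).card
      = ((D ×ˢ D).filter (fun p => p.1 ≠ p.2 ∧ p.1 * p.2⁻¹ = g)).card := by
    intro g _
    rw [Finset.filter_filter]
  rw [Finset.sum_congr rfl hco] at hsplit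
  omega

lemma PDSaux.char_sq {K : Type} [Field K] (χ : G →* Kˣ) (D : Finset G)
    (hinv : ∀ g ∈ D, g⁻¹ ∈ D) :
    (∑ d ∈ D, ((χ d : Kˣ) : K)) * (∑ d ∈ D, ((χ d : Kˣ) : K))
      = ∑ g : G, (((D ×ˢ D).filter (fun p => p.1 * p.2⁻¹ = g)).card : K)
          * ((χ g : Kˣ) : K) := by
  have hre : ∑ d ∈ D, ((χ d : Kˣ) : K) = ∑ d ∈ D, ((χ d⁻¹ : Kˣ) : K) :=
    Finset.sum_nbij' (fun d => d⁻¹) (fun d => d⁻¹)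
      (fun a ha => hinv a ha) (fun a ha => hinv a ha)
      (fun a _ => inv_inv a) (fun a _ => inv_inv a) (fun a _ => by rw [inv_inv])
  calc (∑ d ∈ D, ((χ d : Kˣ) : K)) * (∑ d ∈ D, ((χ d : Kˣ) : K))
      = ∑ p ∈ D ×ˢ D, ((χ (p.1 * p.2⁻¹) : Kˣ) : K) := by
        nth_rewrite 2 [hre]
        rw [Finset.sum_mul_sum, ← Finset.sum_product']
        apply Finset.sum_congr rfl
        intro p _
        rw [map_mul, Units.val_mul]
    _ = ∑ g : G, ∑ p ∈ (D ×ˢ D).filter (fun p => p.1 * p.2⁻¹ = g),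
          ((χ g : Kˣ) : K) := by
        rw [← Finset.sum_fiberwise (D ×ˢ D) (fun p : G × G => p.1 * p.2⁻¹)
          (fun p => ((χ (p.1 * p.2⁻¹) : Kˣ) : K))]
        apply Finset.sum_congr rfl; intro g _
        apply Finset.sum_congr rfl; intro p hp
        rw [(Finset.mem_filter.mp hp).2]
    _ = _ := by
        apply Finset.sum_congr rfl; intro g _
        rw [Finset.sum_const, nsmul_eq_mul]

omit [DecidableEq G] in
lemma PDSaux.sum_char_eq_zero {K : Type} [Field K] (χ : G →* Kˣ) {h0 : G}
    (hh : χ h0 ≠ 1) : ∑ g : G, ((χ g : Kˣ) : K) = 0 := by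
  have key : ((χ h0 : Kˣ) : K) * ∑ g : G, ((χ g : Kˣ) : K)
      = ∑ g : G, ((χ g : Kˣ) : K) := by
    rw [Finset.mul_sum]
    rw [show (fun g => ((χ h0 : Kˣ) : K) * ((χ g : Kˣ) : K))
        = fun g => ((χ (h0 * g) : Kˣ) : K) by
      funext g; rw [map_mul, Units.val_mul]]
    exact Fintype.sum_bijective (fun g => h0 * g) (Group.mulLeft_bijective h0) _ _
      (fun g => rfl)
  have hne : ((χ h0 : Kˣ) : K) ≠ 1 := fun h => hh (Units.ext h)
  have h2 := sub_eq_zero.mpr key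
  rw [← sub_one_mul] at h2
  rcases mul_eq_zero.mp h2 with h | h
  · exact absurd (by linear_combination h) hne
  · exact h

lemma PDSaux.hasEnough (ℓ n : ℕ) [hℓ : Fact ℓ.Prime] (hn : 0 < n) (h : n ∣ ℓ - 1) :
    HasEnoughRootsOfUnity (ZMod ℓ) n := by
  obtain ⟨g, hg⟩ := IsCyclic.exists_generator (α := (ZMod ℓ)ˣ)
  have hog : orderOf g = ℓ - 1 := by
    rw [orderOf_eq_card_of_forall_mem_zpowers hg, Nat.card_eq_fintype_card, ZMod.card_units]
  have hl1 : ℓ - 1 ≠ 0 := by have := hℓ.out.two_le; omega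
  have hoζ : orderOf (g ^ ((ℓ - 1) / n)) = n := by
    rw [orderOf_pow, hog, Nat.gcd_eq_right (Nat.div_dvd_of_dvd h), Nat.div_div_self h hl1]
  refine ⟨⟨((g ^ ((ℓ - 1) / n) : (ZMod ℓ)ˣ) : ZMod ℓ), ?_⟩, inferInstance⟩
  have hpr := IsPrimitiveRoot.orderOf (g ^ ((ℓ - 1) / n))
  rw [hoζ] at hpr
  exact (IsPrimitiveRoot.coe_units_iff).mpr hpr

omit [DecidableEq G] in
lemma PDSaux.exists_char (q ℓ w : ℕ) [Fact q.Prime] [Fact ℓ.Prime]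
    (hw : Nat.card G = q ^ (Nat.card G).factorization q * w)
    (hw1 : 1 < w) (hdvd : w ∣ ℓ - 1) :
    ∃ χ : G →* (ZMod ℓ)ˣ, ∃ g, χ g ≠ 1 := by
  obtain ⟨Q⟩ := Sylow.nonempty (p := q) (G := G)
  have hQcard : Nat.card (Q : Subgroup G) = q ^ (Nat.card G).factorization q :=
    Sylow.card_eq_multiplicity Q
  have hGcard : Nat.card G = Nat.card (G ⧸ (Q : Subgroup G)) * Nat.card (Q : Subgroup G) :=
    Subgroup.card_eq_card_quotient_mul_card_subgroup _
  have hA : Nat.card (G ⧸ (Q : Subgroup G)) = w := by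
    refine Nat.eq_of_mul_eq_mul_left (pow_pos (Fact.out (p := q.Prime)).pos
      ((Nat.card G).factorization q)) ?_
    rw [← hw]
    conv_rhs => rw [hGcard, hQcard]
    exact mul_comm _ _
  have : Nontrivial (G ⧸ (Q : Subgroup G)) :=
    Finite.one_lt_card_iff_nontrivial.mp (by rw [hA]; exact hw1)
  obtain ⟨a, ha⟩ := exists_ne (1 : G ⧸ (Q : Subgroup G))
  have hexp : Monoid.exponent (G ⧸ (Q : Subgroup G)) ∣ ℓ - 1 :=
    dvd_trans Group.exponent_dvd_nat_card (by rw [hA]; exact hdvd)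
  haveI := PDSaux.hasEnough ℓ (Monoid.exponent (G ⧸ (Q : Subgroup G)))
    (Monoid.exponent_pos.mpr Monoid.ExponentExists.of_finite) hexp
  obtain ⟨φ, hφ⟩ := CommGroup.exists_apply_ne_one_of_hasEnoughRootsOfUnity
    (G ⧸ (Q : Subgroup G)) (ZMod ℓ) ha
  obtain ⟨g, hg⟩ := QuotientGroup.mk'_surjective (Q : Subgroup G) a
  exact ⟨φ.comp (QuotientGroup.mk' _), g, by
    simpa only [MonoidHom.comp_apply, hg] using hφ⟩

lemma PDSaux.exists_good_prime {v : ℕ} (h1 : 1 < v) (hodd : Odd v)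
    (hpp : ¬ IsPrimePow v) (hsq : ¬ IsSquare v) :
    ∃ q ℓ : ℕ, q.Prime ∧ q ∣ v ∧ ℓ.Prime ∧ v < ℓ ∧
      (v / q ^ v.factorization q) ∣ ℓ - 1 ∧
      1 < v / q ^ v.factorization q ∧
      ¬ IsSquare ((v : ZMod ℓ)) := by
  have hv0 : v ≠ 0 := by omega
  obtain ⟨a, b, hab, hsf⟩ := Nat.sq_mul_squarefree v
  have ha0 : a ≠ 0 := by rintro rfl; rw [mul_zero] at hab; omega
  have hb0 : b ≠ 0 := by rintro rfl; simp at hab; omega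
  have ha1 : a ≠ 1 := by
    rintro rfl
    exact hsq ⟨b, by rw [← hab]; ring⟩
  obtain ⟨q, hq, hqa⟩ : ∃ q, q.Prime ∧ q ∣ a :=
    ⟨a.minFac, Nat.minFac_prime ha1, Nat.minFac_dvd a⟩
  have hqv : q ∣ v := hqa.trans (Dvd.intro_left _ hab)
  have hodd_mult : Odd (v.factorization q) := by
    have h1' : a.factorization q = 1 :=
      (hsf.natFactorization_le_one q).antisymm (hq.factorization_pos_of_dvd ha0 hqa)
    have hfac : v.factorization = (b ^ 2).factorization + a.factorization := by
      rw [← hab, Nat.factorization_mul (pow_ne_zero 2 hb0) ha0]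
    rw [hfac]
    simp only [Finsupp.add_apply, Nat.factorization_pow, Finsupp.smul_apply, smul_eq_mul, h1']
    exact ⟨b.factorization q, by ring⟩
  set α := v.factorization q with hα
  set w := v / q ^ α with hwdef
  clear_value α w
  have hvqw : q ^ α * w = v := by rw [hwdef, hα]; exact Nat.ordProj_mul_ordCompl_eq_self v q
  have hα1 : 1 ≤ α := by rw [hα]; exact hq.factorization_pos_of_dvd hv0 hqv
  have hqw : ¬ q ∣ w := by rw [hwdef, hα]; exact Nat.not_dvd_ordCompl hq hv0
  have hw0 : w ≠ 0 := by intro h; rw [h, mul_zero] at hvqw; omega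
  have hw1 : 1 < w := by
    by_contra hcon
    have hw_eq : w = 1 := by omega
    exact hpp ⟨q, α, hq.prime, hα1, by rw [← hvqw, hw_eq, mul_one]⟩
  have hq2 : q ≠ 2 := by
    rintro rfl
    exact (Nat.not_even_iff_odd.mpr hodd) ((even_iff_two_dvd).mpr hqv)
  haveI : Fact q.Prime := ⟨hq⟩
  obtain ⟨b0, hb0n⟩ := FiniteField.exists_nonsquare
    (F := ZMod q) (by rwa [ZMod.ringChar_zmod_n])
  have hb0ne : b0 ≠ 0 := fun h => hb0n (h ▸ ⟨0, by ring⟩)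
  have hcop : Nat.Coprime (4 * w) q := by
    rw [Nat.coprime_comm]
    refine (Nat.Prime.coprime_iff_not_dvd hq).mpr ?_
    intro hdvd
    rcases (Nat.Prime.dvd_mul hq).mp hdvd with h | h
    · have h4 : q ∣ 2 ^ 2 := by norm_num; exact h
      have := (Nat.prime_dvd_prime_iff_eq hq Nat.prime_two).mp (hq.dvd_of_dvd_pow h4)
      exact hq2 this
    · exact hqw h
  haveI : NeZero (4 * w * q) := ⟨Nat.mul_ne_zero (Nat.mul_ne_zero (by norm_num) hw0) hq.pos.ne'⟩
  set e := ZMod.chineseRemainder hcop with he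
  obtain ⟨ub, hub⟩ := (isUnit_iff_ne_zero.mpr hb0ne : IsUnit b0)
  have hpu : IsUnit ((1 : ZMod (4 * w)), b0) := by
    rw [← hub]
    exact ⟨⟨((1 : ZMod (4 * w)), (ub : ZMod q)), ((1 : ZMod (4 * w)), ((ub⁻¹ : (ZMod q)ˣ) : ZMod q)),
      by rw [Prod.mk_mul_mk, one_mul, Units.mul_inv]; rfl,
      by rw [Prod.mk_mul_mk, one_mul, Units.inv_mul]; rfl⟩, rfl⟩
  have hcunit : IsUnit (e.symm ((1 : ZMod (4 * w)), b0)) :=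
    RingHom.isUnit_map e.symm.toRingHom hpu
  obtain ⟨ℓ, hℓv, hℓp, hℓmod⟩ := Nat.forall_exists_prime_gt_and_eq_mod hcunit v
  have h2 : e ((ℓ : ZMod (4 * w * q))) = ((1 : ZMod (4 * w)), b0) := by
    rw [hℓmod]; exact e.apply_symm_apply _
  have hnat : e ((ℓ : ZMod (4 * w * q))) = ((ℓ : ZMod (4 * w)), (ℓ : ZMod q)) := by
    rw [map_natCast e ℓ]
    simp [Prod.ext_iff]
  have h4w : ((ℓ : ZMod (4 * w))) = 1 := by
    have := hnat.symm.trans h2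
    exact (Prod.ext_iff.mp this).1
  have hqb : ((ℓ : ZMod q)) = b0 := by
    have := hnat.symm.trans h2
    exact (Prod.ext_iff.mp this).2
  have hl4 : ℓ % 4 = 1 := by
    have h4 : ((ℓ : ZMod 4)) = ((1 : ℕ) : ZMod 4) := by
      have := congrArg (ZMod.castHom (show (4:ℕ) ∣ 4 * w from ⟨w, rfl⟩) (ZMod 4)) h4w
      rwa [map_natCast, map_one, ← Nat.cast_one] at this
    have := (ZMod.natCast_eq_natCast_iff ℓ 1 4).mp h4
    simpa [Nat.ModEq] using this
  have hlw : ℓ % w = 1 % w := by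
    have hww : ((ℓ : ZMod w)) = ((1 : ℕ) : ZMod w) := by
      have := congrArg (ZMod.castHom (show (w:ℕ) ∣ 4 * w from dvd_mul_left w 4) (ZMod w)) h4w
      rwa [map_natCast, map_one, ← Nat.cast_one] at this
    exact (ZMod.natCast_eq_natCast_iff ℓ 1 w).mp hww
  have hwdvd : w ∣ ℓ - 1 := by
    have hmod : 1 ≡ ℓ [MOD w] := (Nat.ModEq.symm hlw)
    exact (Nat.modEq_iff_dvd' (by have := hℓp.two_le; omega)).mp hmod
  haveI : Fact ℓ.Prime := ⟨hℓp⟩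
  have hJq : jacobiSym (ℓ : ℤ) q = -1 := by
    rw [← jacobiSym.legendreSym.to_jacobiSym]
    exact (legendreSym.eq_neg_one_iff' q).mpr (by rwa [hqb])
  have hJw : jacobiSym (ℓ : ℤ) w = 1 := by
    have hmod : (ℓ : ℤ) % (w : ℤ) = (1 : ℤ) % (w : ℤ) := by
      have h := congrArg (fun x : ℕ => (x : ℤ)) hlw
      push_cast at h
      simpa using h
    rw [jacobiSym.mod_left' hmod, jacobiSym.one_left]
  have hJv : jacobiSym (v : ℤ) ℓ = -1 := by
    have hrec : jacobiSym (v : ℤ) ℓ = jacobiSym (ℓ : ℤ) v :=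
      jacobiSym.quadratic_reciprocity_one_mod_four' hodd hl4
    haveI : NeZero (q ^ α) := ⟨pow_ne_zero _ hq.pos.ne'⟩
    haveI : NeZero w := ⟨hw0⟩
    rw [hrec, ← hvqw, jacobiSym.mul_right, jacobiSym.pow_right, hJq, hJw,
      mul_one]
    exact Odd.neg_one_pow hodd_mult
  have hnonsq : ¬ IsSquare ((v : ZMod ℓ)) :=
    (legendreSym.eq_neg_one_iff' ℓ (a := v)).mp
      (by rw [jacobiSym.legendreSym.to_jacobiSym]; exact hJv)
  refine ⟨q, ℓ, hq, hqv, hℓp, hℓv, ?_, ?_, hnonsq⟩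
  · rw [← hα, ← hwdef]; exact hwdvd
  · rw [← hα, ← hwdef]; exact hw1

end Aux

theorem stmt9 (v : ℕ) (h1 : 1 < v) (hodd : Odd v)
    (hpp : ¬ IsPrimePow v) (hsq : ¬ IsSquare v) :
    ∀ (G : Type) [CommGroup G] [Fintype G] [DecidableEq G],
      Fintype.card G = v → ∀ D : Finset G, ¬ IsPaleyPDS D := by
  intro G _ _ _ hcard D hPaley
  obtain ⟨⟨_, hk, hcnt⟩, hinv, h1D⟩ := hPaley
  rw [hcard] at hk hcnt
  -- the subset of non-identity elements in D is D itself
  have hDsub : (univ.erase (1 : G)).filter (fun g => g ∈ D) = D := by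
    ext g
    simp only [Finset.mem_filter, Finset.mem_erase, Finset.mem_univ, true_and, and_true]
    constructor
    · rintro ⟨_, h⟩; exact h
    · intro h; exact ⟨fun he => h1D (he ▸ h), h⟩
  have hcard_erase : (univ.erase (1 : G)).card = v - 1 := by
    rw [Finset.card_erase_of_mem (Finset.mem_univ _), Finset.card_univ, hcard]
  have hnotD : ((univ.erase (1 : G)).filter (fun g => ¬ g ∈ D)).card = (v - 1) - D.card := by
    have h := Finset.card_filter_add_card_filter_not
      (s := univ.erase (1 : G)) (p := fun g => g ∈ D)
    rw [hDsub, hcard_erase] at h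
    omega
  -- counting identity
  have hsum := PDSaux.sum_count D
  have hsum2 : ∑ g ∈ (univ.erase (1 : G)),
      ((D ×ˢ D).filter (fun p => p.1 ≠ p.2 ∧ p.1 * p.2⁻¹ = g)).card
      = ∑ g ∈ (univ.erase (1 : G)), (if g ∈ D then (v-5)/4 else (v-1)/4) := by
    apply Finset.sum_congr rfl
    intro g hg
    rw [hcnt g (Finset.mem_erase.mp hg).1]
  have hite : ∑ g ∈ (univ.erase (1 : G)), (if g ∈ D then (v-5)/4 else (v-1)/4)
      = D.card * ((v-5)/4) + ((v-1) - D.card) * ((v-1)/4) := by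
    rw [← Finset.sum_filter_add_sum_filter_not (univ.erase (1 : G)) (fun g => g ∈ D)]
    congr 1
    · rw [Finset.sum_congr rfl (fun g hg => if_pos (Finset.mem_filter.mp hg).2),
        Finset.sum_const, hDsub, smul_eq_mul]
    · rw [Finset.sum_congr rfl (fun g hg => if_neg (Finset.mem_filter.mp hg).2),
        Finset.sum_const, hnotD, smul_eq_mul]
  have hABC : D.card * D.card - D.card
      = D.card * ((v-5)/4) + ((v-1) - D.card) * ((v-1)/4) := by
    rw [← hite, ← hsum2, hsum]
  -- v ≡ 3 (mod 4) is impossible by counting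
  have hv2 : v % 2 = 1 := Nat.odd_iff.mp hodd
  have hv4 : v % 4 = 1 := by
    rcases (by omega : v % 4 = 1 ∨ v % 4 = 3) with h | h
    · exact h
    · exfalso
      have hv3 : v ≠ 3 := by
        rintro rfl
        exact hpp Nat.prime_three.isPrimePow
      obtain ⟨s, hs⟩ : ∃ s, v = 4 * s + 7 := ⟨(v - 7) / 4, by omega⟩
      have hkv : D.card = 2 * s + 3 := by omega
      have hl : (v - 5) / 4 = s := by omega
      have hm : (v - 1) / 4 = s + 1 := by omega
      have hrest : (v - 1) - (2 * s + 3) = 2 * s + 3 := by omega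
      rw [hkv, hl, hm, hrest] at hABC
      have hexp : (2 * s + 3) * (2 * s + 3) - (2 * s + 3) = (2 * s + 3) * (2 * s + 2) := by
        have : (2 * s + 3) * (2 * s + 3) = (2 * s + 3) * (2 * s + 2) + (2 * s + 3) := by ring
        omega
      rw [hexp] at hABC
      nlinarith [hABC]
  -- main case : v ≡ 1 (mod 4)
  obtain ⟨t, ht⟩ : ∃ t, v = 4 * t + 1 := ⟨v / 4, by omega⟩
  have ht1 : 1 ≤ t := by omega
  have hkv : D.card = 2 * t := by omega
  have hl : (v - 5) / 4 = t - 1 := by omega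
  have hm : (v - 1) / 4 = t := by omega
  -- get the good prime
  obtain ⟨q, ℓ, hq, hqv, hℓp, hvℓ, hwdvd, hw1, hnonsq⟩ :=
    PDSaux.exists_good_prime h1 hodd hpp hsq
  haveI : Fact q.Prime := ⟨hq⟩
  haveI : Fact ℓ.Prime := ⟨hℓp⟩
  have hNat : Nat.card G = v := by rw [Nat.card_eq_fintype_card, hcard]
  have hvqw : q ^ v.factorization q * (v / q ^ v.factorization q) = v :=
    Nat.ordProj_mul_ordCompl_eq_self v q
  obtain ⟨χ, h0, hχ⟩ := PDSaux.exists_char (G := G) q ℓ (v / q ^ v.factorization q)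
    (by rw [hNat]; omega) hw1 hwdvd
  -- the character sum computation
  have hzero : ∑ g : G, ((χ g : (ZMod ℓ)ˣ) : ZMod ℓ) = 0 := PDSaux.sum_char_eq_zero χ hχ
  have hfib : ∀ g ∈ univ.erase (1 : G),
      (((D ×ˢ D).filter (fun p => p.1 * p.2⁻¹ = g)).card : ZMod ℓ)
          * ((χ g : (ZMod ℓ)ˣ) : ZMod ℓ)
      = ((if g ∈ D then (v-5)/4 else (v-1)/4 : ℕ) : ZMod ℓ)
          * ((χ g : (ZMod ℓ)ˣ) : ZMod ℓ) := by
    intro g hg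
    have hg1 := (Finset.mem_erase.mp hg).1
    have hset : ((D ×ˢ D).filter (fun p => p.1 * p.2⁻¹ = g))
        = ((D ×ˢ D).filter (fun p => p.1 ≠ p.2 ∧ p.1 * p.2⁻¹ = g)) := by
      ext p
      simp only [Finset.mem_filter]
      constructor
      · rintro ⟨hp, he⟩
        exact ⟨hp, fun hep => hg1 (by rw [← he, hep, mul_inv_cancel]), he⟩
      · rintro ⟨hp, _, he⟩
        exact ⟨hp, he⟩
    rw [hset, hcnt g hg1]
  have hmain0 := PDSaux.char_sq χ D hinv
  rw [← Finset.add_sum_erase univ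
      (fun g : G => (((D ×ˢ D).filter (fun p => p.1 * p.2⁻¹ = g)).card : ZMod ℓ)
        * ((χ g : (ZMod ℓ)ˣ) : ZMod ℓ)) (Finset.mem_univ (1 : G)),
    PDSaux.diag_card, show χ 1 = 1 from map_one χ, Units.val_one, mul_one,
    Finset.sum_congr rfl hfib] at hmain0
  have hsplit : ∑ g ∈ univ.erase (1 : G),
      ((if g ∈ D then (v-5)/4 else (v-1)/4 : ℕ) : ZMod ℓ) * ((χ g : (ZMod ℓ)ˣ) : ZMod ℓ)
      = (((v-5)/4 : ℕ) : ZMod ℓ) * (∑ d ∈ D, ((χ d : (ZMod ℓ)ˣ) : ZMod ℓ))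
        + (((v-1)/4 : ℕ) : ZMod ℓ) *
          ∑ g ∈ (univ.erase (1 : G)).filter (fun g => ¬ g ∈ D),
            ((χ g : (ZMod ℓ)ˣ) : ZMod ℓ) := by
    rw [← Finset.sum_filter_add_sum_filter_not (univ.erase (1 : G)) (fun g => g ∈ D)]
    congr 1
    · rw [Finset.mul_sum, hDsub]
      apply Finset.sum_congr rfl
      intro g hg
      rw [if_pos hg]
    · rw [Finset.mul_sum]
      apply Finset.sum_congr rfl
      intro g hg
      rw [if_neg (Finset.mem_filter.mp hg).2]
  have hrest2 : ∑ g ∈ (univ.erase (1 : G)).filter (fun g => ¬ g ∈ D),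
      ((χ g : (ZMod ℓ)ˣ) : ZMod ℓ)
      = -1 - ∑ d ∈ D, ((χ d : (ZMod ℓ)ˣ) : ZMod ℓ) := by
    have hsplit2 : ∑ g ∈ univ.erase (1 : G), ((χ g : (ZMod ℓ)ˣ) : ZMod ℓ)
        = (∑ d ∈ D, ((χ d : (ZMod ℓ)ˣ) : ZMod ℓ))
          + ∑ g ∈ (univ.erase (1 : G)).filter (fun g => ¬ g ∈ D),
            ((χ g : (ZMod ℓ)ˣ) : ZMod ℓ) := by
      rw [← Finset.sum_filter_add_sum_filter_not (univ.erase (1 : G)) (fun g => g ∈ D), hDsub]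
    have h1' := Finset.add_sum_erase univ (fun g => ((χ g : (ZMod ℓ)ˣ) : ZMod ℓ))
      (Finset.mem_univ (1 : G))
    beta_reduce at h1'
    rw [hzero, show χ 1 = 1 from map_one χ, Units.val_one, hsplit2] at h1'
    linear_combination h1'
  rw [hsplit, hrest2, hkv, hl, hm] at hmain0
  have hcast2 : ((t - 1 : ℕ) : ZMod ℓ) = (t : ZMod ℓ) - 1 := by
    rw [Nat.cast_sub ht1, Nat.cast_one]
  rw [hcast2] at hmain0
  have hfinal : ((v : ℕ) : ZMod ℓ)
      = (2 * (∑ d ∈ D, ((χ d : (ZMod ℓ)ˣ) : ZMod ℓ)) + 1)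
        * (2 * (∑ d ∈ D, ((χ d : (ZMod ℓ)ˣ) : ZMod ℓ)) + 1) := by
    rw [ht]
    push_cast
    push_cast at hmain0
    linear_combination (-4 : ZMod ℓ) * hmain0
  exact hnonsq ⟨_, hfinal⟩
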